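/- arXiv:1512.00266 — 3 statements merged into one kernel-verified Lean document; each statement's English description precedes it below -/
import Mathlib

section
/- Let T be a triangulated category with small coproducts and G a set of compact objects such that T equals the localizing subcategory generated by G. Suppose that for every A in G there exists an integer d_A \ge 0 such that Hom(A, B[n]) = 0 for all B in G and all n \ge d_A. Then the t-structure t(G) generated by G is non-degenerate: the intersection of all T_{\ge n} over n \in Z is zero, and the intersection of all T_{\le n} over n \in Z is zero. -/
/-!
STATEMENT 1: Non-degeneracy of the t-structure generated by a set of compact objects
generating the category as a localizing subcategory, under a uniform vanishing bound.
-/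

open CategoryTheory Limits Pretriangulated

universe v u

variable (C : Type u) [Category.{v} C] [Preadditive C] [HasZeroObject C]
  [HasShift C ℤ] [∀ n : ℤ, (CategoryTheory.shiftFunctor C n).Additive] [Pretriangulated C]
  [HasCoproducts.{v} C]

/-- The canonical comparison map `⨁ⱼ Hom(X, f j) →+ Hom(X, ∐ f)`. -/
noncomputable def coprodCompare (X : C) {J : Type v} [DecidableEq J] (f : J → C) :
    (DirectSum J (fun j => X ⟶ f j)) →+ (X ⟶ ∐ f) :=
  DirectSum.toAddMonoid fun j =>
    { toFun := fun g => g ≫ Sigma.ι f j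
      map_zero' := by simp
      map_add' := fun a b => by simp [Preadditive.add_comp] }

/-- `X` is compact: `Hom(X, -)` commutes with small coproducts. -/
def IsCompactObj (X : C) : Prop :=
  ∀ (J : Type v) (_ : DecidableEq J) (f : J → C),
    Function.Bijective (coprodCompare C X f)

variable {C}

/-- The smallest class of objects containing `G` and closed under extensions, the
shift `[1]` and small coproducts: the aisle of the generated t-structure. -/
inductive aisle (G : Set C) : C → Prop
  | of (X : C) : X ∈ G → aisle G X
  | shift (X : C) : aisle G X → aisle G (X⟦(1 : ℤ)⟧)
  | ext (T : Triangle C) : (T ∈ distTriang C) → aisle G T.obj₁ → aisle G T.obj₃ →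
      aisle G T.obj₂
  | coprod (J : Type v) (f : J → C) : (∀ j, aisle G (f j)) → aisle G (∐ f)

/-- `T_{<0}` : the objects `N` with `Hom(A, N[-n]) = 0` for all `A ∈ G` and `n ≥ 0`:
the coaisle of the generated t-structure. -/
def coaisle (G : Set C) : Set C :=
  {N | ∀ A ∈ G, ∀ n : ℤ, 0 ≤ n → ∀ f : A ⟶ N⟦(-n)⟧, f = 0}

/-- The localizing subcategory generated by `G` : the smallest triangulated
subcategory closed under small coproducts containing `G`. -/
inductive localizing (G : Set C) : C → Prop
  | of (X : C) : X ∈ G → localizing G X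
  | shift (X : C) (n : ℤ) : localizing G X → localizing G (X⟦n⟧)
  | ext (T : Triangle C) : (T ∈ distTriang C) → localizing G T.obj₁ → localizing G T.obj₂ →
      localizing G T.obj₃
  | coprod (J : Type v) (f : J → C) : (∀ j, localizing G (f j)) → localizing G (∐ f)

set_option linter.unusedSectionVars false

section Auxiliary

variable {G : Set C}

/-- If every map `Y ⟶ X⟦n⟧` vanishes, then every map `Y⟦m⟧ ⟶ X⟦n⟧` vanishes. -/
lemma hom_from_shift_zero {X Y : C} (m : ℤ)
    (h : ∀ n : ℤ, ∀ f : Y ⟶ X⟦n⟧, f = 0) (n : ℤ) (f : Y⟦m⟧ ⟶ X⟦n⟧) : f = 0 := by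
  have h1 : (shiftFunctorCompIsoId C m (-m) (by omega)).inv.app Y ≫
      (shiftFunctor C (-m)).map f ≫ (shiftFunctorAdd C n (-m)).inv.app X = 0 :=
    h (n + -m) _
  have h2 : (shiftFunctor C (-m)).map f = 0 := by
    have := h1 =≫ (shiftFunctorAdd C n (-m)).hom.app X
    simp only [Category.assoc, Iso.inv_hom_id_app, Category.comp_id, zero_comp] at this
    have := (shiftFunctorCompIsoId C m (-m) (by omega)).hom.app Y ≫= this
    simpa using this
  apply (shiftFunctor C (-m)).map_injective
  rw [h2, Functor.map_zero]

/-- Objects all of whose "Hom into all shifts of `X`" vanish against a localizing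
generator are detected: `X` is zero. -/
lemma isZero_of_hom_to_shift_zero (hgen : ∀ X : C, localizing G X) (X : C)
    (h : ∀ A ∈ G, ∀ n : ℤ, ∀ f : A ⟶ X⟦n⟧, f = 0) : IsZero X := by
  have key : ∀ Y : C, localizing G Y → ∀ n : ℤ, ∀ f : Y ⟶ X⟦n⟧, f = 0 := by
    intro Y hY
    induction hY with
    | of Y hY => exact h Y hY
    | shift Y m _ ih => exact hom_from_shift_zero m ih
    | ext T hT _ _ ih₁ ih₂ =>
      intro n f
      obtain ⟨g, hg⟩ := Triangle.yoneda_exact₃ T hT f (ih₂ n (T.mor₂ ≫ f))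
      rw [hg, hom_from_shift_zero 1 ih₁ n g, comp_zero]
    | coprod J f _ ih =>
      intro n g
      apply Limits.Sigma.hom_ext
      intro j
      rw [ih j n (Sigma.ι f j ≫ g), comp_zero]
  rw [IsZero.iff_id_eq_zero]
  have h0 : ((shiftFunctorZero C ℤ).inv.app X : X ⟶ X⟦(0:ℤ)⟧) = 0 := key X (hgen X) 0 _
  calc 𝟙 X = (shiftFunctorZero C ℤ).inv.app X ≫ (shiftFunctorZero C ℤ).hom.app X := by simp
    _ = 0 := by rw [h0, zero_comp]

/-- For a compact object `A` with vanishing bound `d` against `G`, maps from `A`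
into `d`-fold (or higher) shifts of objects of the aisle vanish. -/
lemma hom_to_aisle_shift_zero {A : C} (hA : IsCompactObj C A) (d : ℤ)
    (hd : ∀ B ∈ G, ∀ n : ℤ, d ≤ n → ∀ f : A ⟶ B⟦n⟧, f = 0) :
    ∀ Y : C, aisle G Y → ∀ m : ℤ, d ≤ m → ∀ f : A ⟶ Y⟦m⟧, f = 0 := by
  intro Y hY
  induction hY with
  | of Y hY => exact hd Y hY
  | shift Y _ ih =>
    intro m hm f
    have h1 : f ≫ (shiftFunctorAdd C 1 m).inv.app Y = 0 := ih (1 + m) (by omega) _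
    calc f = (f ≫ (shiftFunctorAdd C 1 m).inv.app Y) ≫ (shiftFunctorAdd C 1 m).hom.app Y := by
            simp
      _ = 0 := by rw [h1, zero_comp]
  | ext T hT _ _ ih₁ ih₃ =>
    intro m hm f
    have hT' := Triangle.shift_distinguished T hT m
    set T' := (CategoryTheory.shiftFunctor (Triangle C) m).obj T with hT'def
    have hf : (f : A ⟶ T'.obj₂) ≫ T'.mor₂ = 0 := ih₃ m hm (f ≫ T'.mor₂)
    obtain ⟨g, hg⟩ := Triangle.coyoneda_exact₂ T' hT' (f : A ⟶ T'.obj₂) hf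
    rw [hg, ih₁ m hm g]
    exact zero_comp
  | coprod J f _ ih =>
    intro m hm g
    have : DecidableEq J := Classical.decEq J
    have hiso : IsIso (sigmaComparison (shiftFunctor C m) f) := inferInstance
    obtain ⟨x, hx⟩ := (hA J this (fun j => (f j)⟦m⟧)).2
      (g ≫ CategoryTheory.inv (sigmaComparison (shiftFunctor C m) f))
    have hx0 : x = 0 := by
      apply DFinsupp.ext
      intro j
      exact ih j m hm (x j)
    have h1 : g ≫ CategoryTheory.inv (sigmaComparison (shiftFunctor C m) f) = 0 := by
      rw [← hx, hx0, map_zero]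
    calc g = (g ≫ CategoryTheory.inv (sigmaComparison (shiftFunctor C m) f)) ≫
            sigmaComparison (shiftFunctor C m) f := by simp
      _ = 0 := by rw [h1, zero_comp]

end Auxiliary

/-- an object lying in all shifted aisles (resp. all shifted coaisles) of
the t-structure `t(G)` is zero. -/
theorem generated_tStructure_nonDegenerate (G : Set C)
    (hG : ∀ X ∈ G, IsCompactObj C X)
    (hgen : ∀ X : C, localizing G X)
    (hvanish : ∀ A ∈ G, ∃ d : ℤ, 0 ≤ d ∧ ∀ B ∈ G, ∀ n : ℤ, d ≤ n → ∀ f : A ⟶ B⟦n⟧, f = 0) :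
    (∀ X : C, (∀ n : ℤ, aisle G (X⟦n⟧)) → IsZero X) ∧
    (∀ X : C, (∀ n : ℤ, X⟦n⟧ ∈ coaisle G) → IsZero X) := by
  constructor
  · intro X hX
    apply isZero_of_hom_to_shift_zero hgen
    intro A hA n f
    obtain ⟨d, _, hd⟩ := hvanish A hA
    have h1 : f ≫ (shiftFunctorAdd' C (n - d) d n (by omega)).hom.app X = 0 :=
      hom_to_aisle_shift_zero (hG A hA) d hd (X⟦n - d⟧) (hX (n - d)) d le_rfl _
    calc f = (f ≫ (shiftFunctorAdd' C (n - d) d n (by omega)).hom.app X) ≫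
            (shiftFunctorAdd' C (n - d) d n (by omega)).inv.app X := by simp
      _ = 0 := by rw [h1, zero_comp]
  · intro X hX
    apply isZero_of_hom_to_shift_zero hgen
    intro A hA n f
    have h := hX n A hA 0 le_rfl
    have h1 : f ≫ (shiftFunctorZero C ℤ).inv.app (X⟦n⟧) = 0 := h _
    calc f = (f ≫ (shiftFunctorZero C ℤ).inv.app (X⟦n⟧)) ≫
            (shiftFunctorZero C ℤ).hom.app (X⟦n⟧) := by simp
      _ = 0 := by rw [h1, zero_comp]
end

section
/- Let f = (f_A, f_B) be a morphism of two-term complexes of abelian groups from (A_1 \xrightarrow{u_1} B_1) to (A_2 \xrightarrow{u_2} B_2), i.e. f_A : A_1 \to A_2 and f_B : B_1 \to B_2 satisfy u_2 \circ f_A = f_B \circ u_1. Then f is a quasi-isomorphism (i.e. the induced maps ker(u_1) \to ker(u_2) and coker(u_1) \to coker(u_2) are isomorphisms) if and only if the maps induced by u_1 and u_2 on kernels and cokernels of f, namely ker(f_A) \to ker(f_B) and coker(f_A) \to coker(f_B), are isomorphisms. -/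
/-!
STATEMENT 9: A morphism of two-term complexes of abelian groups is a
quasi-isomorphism iff the maps induced on the kernels and cokernels of its
components are isomorphisms (snake-lemma diagram chase).
-/

variable {A₁ B₁ A₂ B₂ : Type} [AddCommGroup A₁] [AddCommGroup B₁]
  [AddCommGroup A₂] [AddCommGroup B₂]
  (u₁ : A₁ →+ B₁) (u₂ : A₂ →+ B₂) (fA : A₁ →+ A₂) (fB : B₁ →+ B₂)

section Maps

variable (comm : u₂.comp fA = fB.comp u₁)

/-- The map `ker u₁ →+ ker u₂` induced by `f = (fA, fB)`. -/
def kerMapHoriz : u₁.ker →+ u₂.ker :=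
  (fA.domRestrict u₁.ker).codRestrict u₂.ker (fun x => by
    have h : u₂ (fA x.1) = fB (u₁ x.1) := congrFun (congrArg DFunLike.coe comm) x.1
    have hx : u₁ x.1 = 0 := x.2
    simp [AddMonoidHom.mem_ker, h, hx])

/-- The map `coker u₁ →+ coker u₂` induced by `f = (fA, fB)`. -/
def cokerMapHoriz : B₁ ⧸ u₁.range →+ B₂ ⧸ u₂.range :=
  QuotientAddGroup.map u₁.range u₂.range fB (by
    rintro b ⟨a, rfl⟩
    have h : u₂ (fA a) = fB (u₁ a) := congrFun (congrArg DFunLike.coe comm) a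
    exact ⟨fA a, h⟩)

/-- The map `ker fA →+ ker fB` induced by `u = (u₁, u₂)`. -/
def kerMapVert : fA.ker →+ fB.ker :=
  (u₁.domRestrict fA.ker).codRestrict fB.ker (fun x => by
    have h : u₂ (fA x.1) = fB (u₁ x.1) := congrFun (congrArg DFunLike.coe comm) x.1
    have hx : fA x.1 = 0 := x.2
    simp [AddMonoidHom.mem_ker, ← h, hx])

/-- The map `coker fA →+ coker fB` induced by `u = (u₁, u₂)`. -/
def cokerMapVert : A₂ ⧸ fA.range →+ B₂ ⧸ fB.range :=
  QuotientAddGroup.map fA.range fB.range u₂ (by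
    rintro a ⟨x, rfl⟩
    have h : u₂ (fA x) = fB (u₁ x) := congrFun (congrArg DFunLike.coe comm) x
    exact ⟨u₁ x, h.symm⟩)

end Maps

lemma snake_forward (comm : u₂.comp fA = fB.comp u₁)
    (h1 : Function.Bijective (kerMapHoriz u₁ u₂ fA fB comm))
    (h2 : Function.Bijective (cokerMapHoriz u₁ u₂ fA fB comm)) :
    Function.Bijective (kerMapVert u₁ u₂ fA fB comm) ∧
      Function.Bijective (cokerMapVert u₁ u₂ fA fB comm) := by
  have hc : ∀ a, u₂ (fA a) = fB (u₁ a) :=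
    fun a => congrFun (congrArg DFunLike.coe comm) a
  constructor
  · constructor
    · -- injectivity of ker fA → ker fB
      rw [injective_iff_map_eq_zero]
      rintro ⟨x, hx⟩ h0
      have hu : u₁ x = 0 := congrArg Subtype.val h0
      have hx' : fA x = 0 := hx
      have : kerMapHoriz u₁ u₂ fA fB comm ⟨x, hu⟩ = 0 := Subtype.ext hx'
      have h2' := h1.1 (this.trans (map_zero _).symm)
      have hx0 : x = 0 := congrArg Subtype.val h2'
      exact Subtype.ext hx0
    · -- surjectivity of ker fA → ker fB
      rintro ⟨b, hb⟩
      have hb' : fB b = 0 := hb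
      have h0 : cokerMapHoriz u₁ u₂ fA fB comm (QuotientAddGroup.mk b) = 0 := by
        simpa [cokerMapHoriz, hb'] using rfl
      have hbmem : b ∈ u₁.range := by
        have := (injective_iff_map_eq_zero _).1 h2.1 _ h0
        exact (QuotientAddGroup.eq_zero_iff b).1 this
      obtain ⟨a, ha⟩ := hbmem
      have hfa : fA a ∈ u₂.ker := by
        simp [AddMonoidHom.mem_ker, hc a, ha, hb']
      obtain ⟨k, hk⟩ := h1.2 ⟨fA a, hfa⟩
      have hk' : fA k.1 = fA a := congrArg Subtype.val hk
      refine ⟨⟨a - k.1, ?_⟩, ?_⟩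
      · simp [AddMonoidHom.mem_ker, hk']
      · apply Subtype.ext
        have hk0 : u₁ k.1 = 0 := k.2
        show u₁ (a - k.1) = b
        simp [map_sub, ha, hk0]
  · constructor
    · -- injectivity of coker fA → coker fB
      rw [injective_iff_map_eq_zero]
      intro q
      induction q using QuotientAddGroup.induction_on with
      | H a₂ =>
        intro h0
        have h0' : (QuotientAddGroup.mk (u₂ a₂) : B₂ ⧸ fB.range) = 0 := by
          simpa [cokerMapVert] using h0
        obtain ⟨b₁, hb₁⟩ := (QuotientAddGroup.eq_zero_iff _).1 h0'
        have hbc : cokerMapHoriz u₁ u₂ fA fB comm (QuotientAddGroup.mk b₁) = 0 := by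
          have : (QuotientAddGroup.mk (fB b₁) : B₂ ⧸ u₂.range) = 0 :=
            (QuotientAddGroup.eq_zero_iff _).2 ⟨a₂, hb₁.symm⟩
          simpa [cokerMapHoriz] using this
        obtain ⟨a₁, ha₁⟩ := (QuotientAddGroup.eq_zero_iff b₁).1
          ((injective_iff_map_eq_zero _).1 h2.1 _ hbc)
        have hker : a₂ - fA a₁ ∈ u₂.ker := by
          simp [AddMonoidHom.mem_ker, map_sub, hc a₁, ha₁, hb₁]
        obtain ⟨k, hk⟩ := h1.2 ⟨a₂ - fA a₁, hker⟩
        have hk' : fA k.1 = a₂ - fA a₁ := congrArg Subtype.val hk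
        refine (QuotientAddGroup.eq_zero_iff a₂).2 ⟨a₁ + k.1, ?_⟩
        simp [map_add, hk']
    · -- surjectivity of coker fA → coker fB
      intro q
      induction q using QuotientAddGroup.induction_on with
      | H b₂ =>
        obtain ⟨q₁, hq₁⟩ := h2.2 (QuotientAddGroup.mk b₂)
        obtain ⟨b₁, rfl⟩ := QuotientAddGroup.mk_surjective q₁
        have hq₁' : (QuotientAddGroup.mk (fB b₁) : B₂ ⧸ u₂.range) =
            QuotientAddGroup.mk b₂ := by simpa [cokerMapHoriz] using hq₁
        obtain ⟨a₂, ha₂⟩ := QuotientAddGroup.eq.1 hq₁'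
        refine ⟨QuotientAddGroup.mk a₂, ?_⟩
        show (QuotientAddGroup.mk (u₂ a₂) : B₂ ⧸ fB.range) = QuotientAddGroup.mk b₂
        refine QuotientAddGroup.eq.2 ⟨b₁, ?_⟩
        have : b₂ = fB b₁ + u₂ a₂ := by rw [ha₂]; abel
        rw [this]; abel

theorem quasiIso_iff_ker_coker (comm : u₂.comp fA = fB.comp u₁) :
    (Function.Bijective (kerMapHoriz u₁ u₂ fA fB comm) ∧
      Function.Bijective (cokerMapHoriz u₁ u₂ fA fB comm)) ↔
    (Function.Bijective (kerMapVert u₁ u₂ fA fB comm) ∧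
      Function.Bijective (cokerMapVert u₁ u₂ fA fB comm)) :=
  ⟨fun ⟨h1, h2⟩ => snake_forward u₁ u₂ fA fB comm h1 h2,
   fun ⟨h1, h2⟩ => snake_forward fA fB u₁ u₂ comm.symm h1 h2⟩
end

section
/- Let k be a field and G a commutative group scheme of finite type over k. Let A be an abelian subvariety of G which equals the underlying reduced subscheme of the identity component of G. Suppose there is an exact sequence of commutative group schemes 0 \to B \to G \to F \to 0 with B an abelian variety and F a finite group scheme over k. Then A = B as subgroup schemes of G. -/
/-!
STATEMENT 12: Over a field `k`, let `G` be a commutative group scheme of finite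
type, `A` an abelian subvariety of `G` equal to the underlying reduced subscheme
of the identity component of `G` (encoded by its universal property: the largest
connected reduced subgroup scheme of `G`), and suppose `0 → B → G → F → 0` is an
exact sequence of commutative group schemes (exact as fppf sheaves) with `B` an
abelian variety and `F` finite.  Then `A = B` as subgroup schemes of `G`.

Commutative group schemes are formalized via their functor of points.
-/

open AlgebraicGeometry CategoryTheory Limits

/-- The set of `t`-points of `π : X ⟶ S`, for `t : T ⟶ S`. -/
abbrev sections {X S T : Scheme} (π : X ⟶ S) (t : T ⟶ S) : Type :=
  {f : T ⟶ X // f ≫ π = t}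

/-- Restriction of a `t`-point along `c : T' ⟶ T`. -/
def pullSection {X S T T' : Scheme} {π : X ⟶ S} {t : T ⟶ S} (c : T' ⟶ T)
    (a : sections π t) : sections π (c ≫ t) :=
  ⟨c ≫ a.val, by rw [Category.assoc, a.2]⟩

/-- A commutative group scheme over `S`: a scheme `X/S` with a commutative group
structure on its functor of points. -/
structure CommGroupSchemeOver (S : Scheme) where
  X : Scheme
  π : X ⟶ S
  grp : ∀ {T : Scheme} (t : T ⟶ S), CommGroup (sections π t)
  naturality_mul : ∀ {T T' : Scheme} (c : T' ⟶ T) (t : T ⟶ S) (a b : sections π t),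
    letI := grp (c ≫ t)
    letI := grp t
    pullSection c (a * b) = pullSection c a * pullSection c b

instance {S : Scheme} (G : CommGroupSchemeOver S) {T : Scheme} (t : T ⟶ S) :
    CommGroup (sections G.π t) := G.grp t

/-- A homomorphism of commutative group schemes over `S`. -/
structure GroupSchemeHom {S : Scheme} (G H : CommGroupSchemeOver S) where
  hom : G.X ⟶ H.X
  w : hom ≫ H.π = G.π
  map_mul : ∀ {T : Scheme} (t : T ⟶ S) (a b : sections G.π t),
    (⟨(a * b).val ≫ hom, by rw [Category.assoc, w, (a * b).2]⟩ : sections H.π t) =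
      (⟨a.val ≫ hom, by rw [Category.assoc, w, a.2]⟩ : sections H.π t) *
        (⟨b.val ≫ hom, by rw [Category.assoc, w, b.2]⟩ : sections H.π t)

/-- Pushforward of points along a homomorphism. -/
def GroupSchemeHom.push {S : Scheme} {G H : CommGroupSchemeOver S}
    (φ : GroupSchemeHom G H) {T : Scheme} {t : T ⟶ S} (a : sections G.π t) :
    sections H.π t :=
  ⟨a.val ≫ φ.hom, by rw [Category.assoc, φ.w, a.2]⟩

/-- A subgroup scheme: a closed immersion of group schemes. -/
structure SubgroupScheme {S : Scheme} (G : CommGroupSchemeOver S) where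
  grp : CommGroupSchemeOver S
  ι : GroupSchemeHom grp G
  closed : IsClosedImmersion ι.hom
  inj : ∀ {T : Scheme} (t : T ⟶ S),
    Function.Injective (fun a : sections grp.π t => ι.push a)

/-- The image of a subgroup scheme on `t`-points. -/
def SubgroupScheme.image {S : Scheme} {G : CommGroupSchemeOver S}
    (A : SubgroupScheme G) {T : Scheme} (t : T ⟶ S) : Set (sections G.π t) :=
  Set.range (fun a : sections A.grp.π t => A.ι.push a)

/-- A flat morphism of schemes: all induced maps on stalks are flat. -/
def FlatMorphism {X Y : Scheme} (f : X ⟶ Y) : Prop :=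
  ∀ x : X, RingHom.Flat (f.stalkMap x).hom

section AuxAlgebra

/-- In a reduced ring with only trivial idempotents, any element that is integral over a
field and maps to `0` under a ring hom to a nontrivial ring must be `0`. -/
theorem key_eq_zero {Λ : Type*} [Field Λ] {S : Type*} [CommRing S] [Algebra Λ S]
    [IsReduced S] (hid : ∀ u : S, u * u = u → u = 0 ∨ u = 1)
    {T : Type*} [CommRing T] [Nontrivial T] (χ : S →+* T)
    {a : S} (ha : IsIntegral Λ a) (h0 : χ a = 0) : a = 0 := by
  classical
  set N := Algebra.adjoin Λ ({a} : Set S) with hN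
  have hfg : (Subalgebra.toSubmodule N).FG := ha.fg_adjoin_singleton
  haveI hart1 : IsArtinian Λ (Subalgebra.toSubmodule N) := isArtinian_of_fg_of_artinian _ hfg
  haveI hart2 : IsArtinian Λ N := hart1
  haveI : IsArtinianRing N := isArtinian_of_tower Λ hart2
  set α : N := ⟨a, Algebra.subset_adjoin rfl⟩ with hα
  have mono : ∀ {i j : ℕ}, i ≤ j → Ideal.span {α ^ j} ≤ Ideal.span {α ^ i} := by
    intro i j hij
    rw [Ideal.span_singleton_le_span_singleton]
    exact ⟨α ^ (j - i), by rw [← pow_add, Nat.add_sub_cancel' hij]⟩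
  obtain ⟨n, hn⟩ := IsArtinian.monotone_stabilizes
    (⟨fun n => OrderDual.toDual (Ideal.span {α ^ n}),
      fun i j hij => mono hij⟩ : ℕ →o (Ideal N)ᵒᵈ)
  have hspan : Ideal.span {α ^ (n + 1)} = Ideal.span {α ^ (n + 2)} := by
    have h1 := hn (n + 1) (by omega)
    have h2 := hn (n + 2) (by omega)
    exact (h1.symm.trans h2 : _)
  have hmem : α ^ (n + 1) ∈ Ideal.span ({α ^ (n + 2)} : Set N) := by
    rw [← hspan]; exact Ideal.subset_span rfl
  obtain ⟨β, hβ⟩ := Ideal.mem_span_singleton'.mp hmem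
  set m := n + 1 with hm
  set b : S := (β : S) with hb
  have hab : b * a ^ (m + 1) = a ^ m := by
    have := congrArg (Subtype.val : N → S) hβ
    simpa using this
  have h1 : ∀ j : ℕ, a ^ m * (a * b) ^ j = a ^ m := by
    intro j
    induction j with
    | zero => simp
    | succ j ih =>
      calc a ^ m * (a * b) ^ (j + 1) = (a ^ m * (a * b) ^ j) * (a * b) := by ring
        _ = a ^ m * (a * b) := by rw [ih]
        _ = b * a ^ (m + 1) := by ring
        _ = a ^ m := hab
  have he : (a ^ m * b ^ m) * (a ^ m * b ^ m) = a ^ m * b ^ m := by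
    calc (a ^ m * b ^ m) * (a ^ m * b ^ m) = (a ^ m * (a * b) ^ m) * (b ^ m) := by
          rw [mul_pow]; ring
      _ = a ^ m * b ^ m := by rw [h1]
  rcases hid _ he with he0 | he1
  · have h3 : a ^ m * (a ^ m * b ^ m) = a ^ m := by
      have := h1 m; rwa [mul_pow] at this
    rw [he0, mul_zero] at h3
    exact IsNilpotent.eq_zero ⟨m, h3.symm⟩
  · exfalso
    have : χ (a ^ m * b ^ m) = 0 := by
      rw [map_mul, map_pow, h0, zero_pow (by omega : m ≠ 0), zero_mul]
    rw [he1, map_one] at this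
    exact one_ne_zero this

/-- Transfer of integrality along a ring hom compatible with the algebra maps. -/
theorem isIntegral_of_comp {Λ R S : Type*} [CommRing Λ] [CommRing R] [CommRing S]
    [Algebra Λ R] [Algebra Λ S] (f : R →+* S)
    (hf : f.comp (algebraMap Λ R) = algebraMap Λ S)
    {r : R} (hr : IsIntegral Λ r) : IsIntegral Λ (f r) := by
  obtain ⟨p, hm, hp⟩ := hr
  exact ⟨p, hm, by rw [← hf, ← Polynomial.hom_eval₂, hp, map_zero]⟩

end AuxAlgebra

section AuxScheme

open AlgebraicGeometry CategoryTheory Limits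

/-- On a connected reduced scheme, idempotent global sections are trivial. -/
theorem idem_trivial {X : Scheme} [ConnectedSpace ↥X] [hX : IsReduced X]
    (u : Γ(X, ⊤)) (hu : u * u = u) : u = 0 ∨ u = 1 := by
  have hzero : u * (1 - u) = 0 := by rw [mul_sub, mul_one, hu, sub_self]
  have hdisj : X.basicOpen u ⊓ X.basicOpen (1 - u) = ⊥ := by
    rw [← Scheme.basicOpen_mul, hzero, Scheme.basicOpen_zero]
  have hcover : ∀ x : ↥X, x ∈ X.basicOpen u ∨ x ∈ X.basicOpen (1 - u) := by
    intro x
    rcases IsLocalRing.isUnit_or_isUnit_one_sub_self (X.presheaf.germ ⊤ x trivial u) with h | h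
    · exact Or.inl ((X.mem_basicOpen_top u x).mpr h)
    · refine Or.inr ((X.mem_basicOpen_top (1 - u) x).mpr ?_)
      rwa [map_sub, map_one]
  have hclopen : IsClopen (X.basicOpen u : Set ↥X) := by
    constructor
    · have hcompl : (X.basicOpen u : Set ↥X)ᶜ = (X.basicOpen (1 - u) : Set ↥X) := by
        ext x
        constructor
        · intro hx
          rcases hcover x with h | h
          · exact absurd h hx
          · exact h
        · intro hx hx'
          have : x ∈ X.basicOpen u ⊓ X.basicOpen (1 - u) := ⟨hx', hx⟩
          rw [hdisj] at this
          exact this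
      rw [← isOpen_compl_iff, hcompl]
      exact (X.basicOpen (1 - u)).isOpen
    · exact (X.basicOpen u).isOpen
  rcases isClopen_iff.mp hclopen with h | h
  · left
    have : X.basicOpen u = ⊥ := by
      apply TopologicalSpace.Opens.ext; simpa using h
    exact (AlgebraicGeometry.basicOpen_eq_bot_iff u).mp this
  · right
    have h2 : X.basicOpen (1 - u) = ⊥ := by
      apply TopologicalSpace.Opens.ext
      have : (X.basicOpen u : Set ↥X) ∩ (X.basicOpen (1 - u) : Set ↥X) = ∅ := by
        have h3 := congrArg (fun o : TopologicalSpace.Opens ↥X => (o : Set ↥X)) hdisj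
        simpa using h3
      simpa [h] using this
    have : (1 : Γ(X, ⊤)) - u = 0 := (AlgebraicGeometry.basicOpen_eq_bot_iff _).mp h2
    linear_combination -this

/-- Two morphisms over `Spec k` from a connected reduced scheme to a scheme finite over
`Spec k`, agreeing after composition with a section of the structure morphism, are equal. -/
theorem morphisms_to_finite_eq {k : Type} [Field k] {X FX : Scheme}
    (πX : X ⟶ Spec (CommRingCat.of k)) (πF : FX ⟶ Spec (CommRingCat.of k))
    [hF : IsFinite πF] [ConnectedSpace ↥X] [IsReduced X]
    (q ε : X ⟶ FX) (hq : q ≫ πF = πX) (hε : ε ≫ πF = πX)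
    (ev : Spec (CommRingCat.of k) ⟶ X) (hpoint : ev ≫ q = ev ≫ ε) : q = ε := by
  haveI : IsAffine FX := isAffine_of_isAffineHom πF
  apply ext_of_isAffine (Y := FX)
  -- set up algebra structures over Λ := Γ(Spec k)
  letI Λfield : Field Γ(Spec (CommRingCat.of k), ⊤) :=
    (((Scheme.ΓSpecIso (CommRingCat.of k)).commRingCatIsoToRingEquiv).toMulEquiv.isField
      (Field.toIsField k)).toField
  letI : Algebra Γ(Spec (CommRingCat.of k), ⊤) Γ(X, ⊤) := (πX.appTop).hom.toAlgebra
  letI : Algebra Γ(Spec (CommRingCat.of k), ⊤) Γ(FX, ⊤) := (πF.appTop).hom.toAlgebra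
  have hfin : RingHom.Finite (πF.appTop).hom :=
    πF.finite_app ⊤ (isAffineOpen_top _)
  haveI : Module.Finite Γ(Spec (CommRingCat.of k), ⊤) Γ(FX, ⊤) := hfin
  have hcq : (q.appTop).hom.comp (algebraMap Γ(Spec (CommRingCat.of k), ⊤) Γ(FX, ⊤)) =
      algebraMap Γ(Spec (CommRingCat.of k), ⊤) Γ(X, ⊤) := by
    show (q.appTop).hom.comp (πF.appTop).hom = (πX.appTop).hom
    have := congrArg Scheme.Hom.appTop hq
    rw [Scheme.Hom.comp_appTop] at this
    rw [← this]; rfl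
  have hcε : (ε.appTop).hom.comp (algebraMap Γ(Spec (CommRingCat.of k), ⊤) Γ(FX, ⊤)) =
      algebraMap Γ(Spec (CommRingCat.of k), ⊤) Γ(X, ⊤) := by
    show (ε.appTop).hom.comp (πF.appTop).hom = (πX.appTop).hom
    have := congrArg Scheme.Hom.appTop hε
    rw [Scheme.Hom.comp_appTop] at this
    rw [← this]; rfl
  refine CommRingCat.hom_ext (RingHom.ext fun r => ?_)
  have hint : IsIntegral Γ(Spec (CommRingCat.of k), ⊤) (q.appTop r - ε.appTop r) := by
    have hr : IsIntegral Γ(Spec (CommRingCat.of k), ⊤) r := IsIntegral.of_finite _ r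
    exact (isIntegral_of_comp (q.appTop).hom hcq hr).sub (isIntegral_of_comp (ε.appTop).hom hcε hr)
  have hχ : (ev.appTop) (q.appTop r - ε.appTop r) = 0 := by
    have := congrArg Scheme.Hom.appTop hpoint
    rw [Scheme.Hom.comp_appTop, Scheme.Hom.comp_appTop] at this
    have h2 : ev.appTop (q.appTop r) = ev.appTop (ε.appTop r) := by
      have := congrArg (fun (f : Γ(FX, ⊤) ⟶ Γ(Spec (CommRingCat.of k), ⊤)) => f r) this
      simpa using this
    rw [map_sub, h2, sub_self]
  have := key_eq_zero (Λ := Γ(Spec (CommRingCat.of k), ⊤))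
    (fun u hu => idem_trivial u hu) (ev.appTop).hom hint hχ
  exact sub_eq_zero.mp this

end AuxScheme

section AuxGroup

open AlgebraicGeometry CategoryTheory Limits

theorem pullSection_one {S : Scheme} (H : CommGroupSchemeOver S) {T T' : Scheme}
    (c : T' ⟶ T) (t : T ⟶ S) :
    pullSection c (1 : sections H.π t) = (1 : sections H.π (c ≫ t)) := by
  have h := H.naturality_mul c t 1 1
  rw [mul_one] at h
  exact (left_eq_mul.mp h : _)

theorem push_one {S : Scheme} {G H : CommGroupSchemeOver S} (φ : GroupSchemeHom G H)
    {T : Scheme} (t : T ⟶ S) :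
    φ.push (1 : sections G.π t) = (1 : sections H.π t) := by
  have h : φ.push ((1 : sections G.π t) * 1) =
      φ.push (1 : sections G.π t) * φ.push (1 : sections G.π t) := φ.map_mul t 1 1
  rw [mul_one] at h
  exact (left_eq_mul.mp h : _)

theorem one_val_congr {S : Scheme} (H : CommGroupSchemeOver S) {T : Scheme}
    {t t' : T ⟶ S} (h : t = t') :
    ((1 : sections H.π t).val) = ((1 : sections H.π t').val) := by subst h; rfl


theorem push_pull {S : Scheme} {G H : CommGroupSchemeOver S} (φ : GroupSchemeHom G H)
    {T T' : Scheme} (c : T' ⟶ T) {t : T ⟶ S} (a : sections G.π t) :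
    φ.push (pullSection c a) = pullSection c (φ.push a) := by
  apply Subtype.ext
  simp [GroupSchemeHom.push, pullSection]

end AuxGroup

theorem abelian_subvariety_eq_of_exact_sequence
    (k : Type) [Field k]
    (G : CommGroupSchemeOver (Spec (CommRingCat.of k)))
    (hGft : LocallyOfFiniteType G.π) (hGqc : QuasiCompact G.π)
    (A B : SubgroupScheme G)
    -- `A` is an abelian variety:
    (hA_smooth : IsSmooth A.grp.π) (hA_proper : IsProper A.grp.π)
    (hA_conn : ConnectedSpace ↥A.grp.X) (hA_red : IsReduced A.grp.X)
    -- `A` is the underlying reduced subscheme of the identity component of `G`: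
    -- every connected reduced subgroup scheme of `G` is contained in `A`
    (hA_max : ∀ C : SubgroupScheme G, IsReduced C.grp.X → ConnectedSpace ↥C.grp.X →
      ∀ (T : Scheme) (t : T ⟶ Spec (CommRingCat.of k)), C.image t ⊆ A.image t)
    -- `B` is an abelian variety:
    (hB_smooth : IsSmooth B.grp.π) (hB_proper : IsProper B.grp.π)
    (hB_conn : ConnectedSpace ↥B.grp.X) (hB_red : IsReduced B.grp.X)
    -- the exact sequence `0 → B → G → F → 0` with `F` finite:
    (F : CommGroupSchemeOver (Spec (CommRingCat.of k))) (hF : IsFinite F.π)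
    (p : GroupSchemeHom G F)
    -- exactness in the middle: `B` is the kernel of `p`
    (hker : ∀ (T : Scheme) (t : T ⟶ Spec (CommRingCat.of k)),
      B.image t = {a : sections G.π t | p.push a = 1})
    -- exactness on the right: `p` is surjective as a map of fppf sheaves
    (hsurj : ∀ (T : Scheme) (t : T ⟶ Spec (CommRingCat.of k)) (y : sections F.π t),
      ∃ (T' : Scheme) (c : T' ⟶ T), FlatMorphism c ∧ LocallyOfFinitePresentation c ∧
        Function.Surjective c.base ∧
        ∃ x : sections G.π (c ≫ t), p.push x = pullSection c y) :
    -- conclusion: `A = B` as subgroup schemes of `G`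
    ∀ (T : Scheme) (t : T ⟶ Spec (CommRingCat.of k)), A.image t = B.image t := by
  intro T t
  haveI := hA_conn
  haveI := hA_red
  haveI := hF
  set τ : sections A.grp.π A.grp.π := ⟨𝟙 A.grp.X, Category.id_comp _⟩ with hτ
  set ev := (1 : sections A.grp.π (𝟙 (Spec (CommRingCat.of k)))) with hev
  have key : p.push (A.ι.push τ) = 1 := by
    apply Subtype.ext
    have hq : ((p.push (A.ι.push τ)).val) ≫ F.π = A.grp.π := (p.push (A.ι.push τ)).2
    have hε : ((1 : sections F.π A.grp.π).val) ≫ F.π = A.grp.π := (1 : sections F.π A.grp.π).2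
    apply morphisms_to_finite_eq A.grp.π F.π _ _ hq hε ev.val
    -- both sides become the identity section over `ev.val ≫ A.grp.π`
    have hpt1 : pullSection ev.val τ = (1 : sections A.grp.π (ev.val ≫ A.grp.π)) := by
      apply Subtype.ext
      rw [one_val_congr A.grp ev.2]
      show ev.val ≫ 𝟙 A.grp.X = ev.val
      simp
    have hL : ev.val ≫ (p.push (A.ι.push τ)).val =
        (1 : sections F.π (ev.val ≫ A.grp.π)).val := by
      have h1 : (pullSection ev.val (p.push (A.ι.push τ))) =
          p.push (A.ι.push (pullSection ev.val τ)) := by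
        rw [push_pull, push_pull]
      have h2 : p.push (A.ι.push (pullSection ev.val τ)) =
          (1 : sections F.π (ev.val ≫ A.grp.π)) := by
        rw [hpt1, push_one, push_one]
      have := congrArg Subtype.val (h1.trans h2)
      simpa [pullSection] using this
    have hR : ev.val ≫ (1 : sections F.π A.grp.π).val =
        (1 : sections F.π (ev.val ≫ A.grp.π)).val := by
      have := congrArg Subtype.val (pullSection_one F ev.val A.grp.π)
      simpa [pullSection] using this
    rw [hL, hR]
  apply Set.eq_of_subset_of_subset
  · rintro x ⟨y, rfl⟩
    rw [hker]
    show p.push (A.ι.push y) = 1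
    obtain ⟨yv, hyv⟩ := y
    subst hyv
    calc p.push (A.ι.push ⟨yv, rfl⟩) = pullSection yv (p.push (A.ι.push τ)) := by
          apply Subtype.ext
          simp [pullSection, GroupSchemeHom.push, hτ]
      _ = pullSection yv 1 := by rw [key]
      _ = 1 := pullSection_one F _ _
  · exact hA_max B hB_red hB_conn T t
end
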